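/- For every σ > 1, setting x_σ = √( 2σ²·ln(σ) / (σ² − 1) ), one has d_TV(N(0,1), N(0,σ²)) = Φ(x_σ) − Φ(x_σ/σ) − Φ(−x_σ) + Φ(−x_σ/σ) ≤ √(2/π)·(σ − 1), where Φ is the standard normal cumulative distribution function. -/

import Mathlib

open MeasureTheory ProbabilityTheory

/-- Total variation distance between two (Borel) measures on `ℝ`. -/
noncomputable def tvDist (μ ν : Measure ℝ) : ℝ :=
  ⨆ A : {s : Set ℝ // MeasurableSet s}, |(μ A.1).toReal - (ν A.1).toReal|

/-- The standard normal cumulative distribution function `Φ`. -/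
noncomputable def Phi : ℝ → ℝ := fun x => cdf (gaussianReal 0 1) x

lemma icc_cdf (a b : ℝ) (P : Measure ℝ) [IsProbabilityMeasure P] (h : P {a} = 0) (hab : a ≤ b) :
    (P (Set.Icc a b)).toReal = cdf P b - cdf P a := by
  have h1 : P (Set.Icc a b) = P (Set.Ioc a b) := by
    rw [← Set.Ioc_union_left hab]
    refine le_antisymm ?_ (measure_mono Set.subset_union_left)
    calc P (Set.Ioc a b ∪ {a}) ≤ P (Set.Ioc a b) + P {a} := measure_union_le _ _
      _ = P (Set.Ioc a b) := by simp [h]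
  have h2 : Set.Ioc a b = Set.Iic b \ Set.Iic a := by
    ext y; simp only [Set.mem_Ioc, Set.mem_diff, Set.mem_Iic, not_le]; tauto
  rw [h1, h2, measure_diff (Set.Iic_subset_Iic.2 hab) measurableSet_Iic.nullMeasurableSet
    (measure_ne_top P _), ENNReal.toReal_sub_of_le (measure_mono (Set.Iic_subset_Iic.2 hab))
    (measure_ne_top P _), cdf_eq_real, cdf_eq_real, measureReal_def, measureReal_def]

/-- Pointwise comparison of gaussian densities. -/
lemma pdf_cmp (σ : ℝ) (hσ : 1 < σ) (y : ℝ) :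
    gaussianPDFReal 0 (⟨σ ^ 2, sq_nonneg σ⟩) y ≤ gaussianPDFReal 0 1 y ↔
      y ^ 2 ≤ 2 * σ ^ 2 * Real.log σ / (σ ^ 2 - 1) := by
  have hσ0 : (0:ℝ) < σ := lt_trans one_pos hσ
  have h2π : (0:ℝ) < 2 * Real.pi := by positivity
  have hs0 : (0:ℝ) < Real.sqrt (2 * Real.pi) := Real.sqrt_pos.2 h2π
  have hσ2 : (0:ℝ) < σ ^ 2 := by positivity
  have hσ21 : (0:ℝ) < σ ^ 2 - 1 := by nlinarith
  simp only [gaussianPDFReal, NNReal.coe_mk, NNReal.coe_one, sub_zero, mul_one]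
  change (Real.sqrt (2 * Real.pi * σ ^ 2))⁻¹ * Real.exp (-y ^ 2 / (2 * σ ^ 2)) ≤ _ ↔ _
  have hsq : Real.sqrt (2 * Real.pi * σ ^ 2) = Real.sqrt (2 * Real.pi) * σ := by
    rw [Real.sqrt_mul h2π.le, Real.sqrt_sq hσ0.le]
  rw [hsq, mul_inv, mul_assoc, mul_le_mul_iff_of_pos_left (inv_pos.2 hs0),
    inv_mul_le_iff₀ hσ0]
  nth_rewrite 2 [← Real.exp_log hσ0]
  rw [← Real.exp_add, Real.exp_le_exp, le_div_iff₀ hσ21,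
    div_le_iff₀ (show (0:ℝ) < 2 * σ ^ 2 by positivity)]
  constructor <;> intro h <;> nlinarith [h]

/-- The measure of a subset of a set where the density is smaller is smaller. -/
lemma gauss_mono (v w : NNReal) (hv : v ≠ 0) (hw : w ≠ 0) (B : Set ℝ)
    (h : ∀ y ∈ B, gaussianPDFReal 0 v y ≤ gaussianPDFReal 0 w y) :
    gaussianReal 0 v B ≤ gaussianReal 0 w B := by
  rw [gaussianReal_apply 0 hv, gaussianReal_apply 0 hw]
  exact setLIntegral_mono (measurable_gaussianPDF 0 w)
    (fun y hy => ENNReal.ofReal_le_ofReal (h y hy))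

theorem stmt13 (σ : ℝ) (hσ : 1 < σ) :
    tvDist (gaussianReal 0 1) (gaussianReal 0 ⟨σ ^ 2, sq_nonneg σ⟩)
        = Phi (Real.sqrt (2 * σ ^ 2 * Real.log σ / (σ ^ 2 - 1)))
          - Phi (Real.sqrt (2 * σ ^ 2 * Real.log σ / (σ ^ 2 - 1)) / σ)
          - Phi (-Real.sqrt (2 * σ ^ 2 * Real.log σ / (σ ^ 2 - 1)))
          + Phi (-(Real.sqrt (2 * σ ^ 2 * Real.log σ / (σ ^ 2 - 1)) / σ)) ∧
      tvDist (gaussianReal 0 1) (gaussianReal 0 ⟨σ ^ 2, sq_nonneg σ⟩)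
        ≤ Real.sqrt (2 / Real.pi) * (σ - 1) := by
  have hσ0 : (0:ℝ) < σ := lt_trans one_pos hσ
  have hσ2 : (0:ℝ) < σ ^ 2 := by positivity
  have hσ21 : (0:ℝ) < σ ^ 2 - 1 := by nlinarith
  have hlog : 0 < Real.log σ := Real.log_pos hσ
  set c : ℝ := 2 * σ ^ 2 * Real.log σ / (σ ^ 2 - 1) with hc
  have hc0 : 0 < c := by positivity
  set x : ℝ := Real.sqrt c with hx
  have hx0 : 0 ≤ x := Real.sqrt_nonneg c
  set v : NNReal := (⟨σ ^ 2, sq_nonneg σ⟩ : NNReal) with hv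
  have hvne : v ≠ 0 := by
    intro h
    have : ((v : NNReal) : ℝ) = 0 := by rw [h]; simp
    rw [hv] at this
    exact absurd this hσ2.ne'
  set μ := gaussianReal 0 1 with hμ
  set ν := gaussianReal 0 v with hν
  have hone : (1:NNReal) ≠ 0 := one_ne_zero
  set S : Set ℝ := Set.Icc (-x) x with hS
  have hSm : MeasurableSet S := measurableSet_Icc
  have hmem : ∀ y, y ∈ S ↔ y ^ 2 ≤ c := by
    intro y
    constructor
    · rintro ⟨h1, h2⟩
      have hay : |y| ≤ Real.sqrt c := abs_le.2 ⟨h1, h2⟩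
      calc y ^ 2 = |y| ^ 2 := (sq_abs y).symm
        _ ≤ (Real.sqrt c) ^ 2 := by nlinarith [abs_nonneg y]
        _ = c := Real.sq_sqrt hc0.le
    · intro h
      have : |y| ≤ Real.sqrt c := by
        rw [← Real.sqrt_sq_eq_abs]; exact Real.sqrt_le_sqrt h
      exact abs_le.1 this
  have hpdfS : ∀ y ∈ S, gaussianPDFReal 0 v y ≤ gaussianPDFReal 0 1 y :=
    fun y hy => (pdf_cmp σ hσ y).2 ((hmem y).1 hy)
  have hpdfSc : ∀ y ∈ Sᶜ, gaussianPDFReal 0 1 y ≤ gaussianPDFReal 0 v y := by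
    intro y hy
    by_contra hcon
    exact hy ((hmem y).2 ((pdf_cmp σ hσ y).1 (le_of_not_ge hcon)))
  have key : ∀ A : Set ℝ, MeasurableSet A →
      (μ A).toReal - (ν A).toReal ≤ (μ S).toReal - (ν S).toReal := by
    intro A hA
    have d1 : (μ A).toReal = (μ (A ∩ S)).toReal + (μ (A \ S)).toReal := by
      rw [← ENNReal.toReal_add (measure_ne_top μ _) (measure_ne_top μ _),
        measure_inter_add_diff A hSm]
    have d2 : (ν A).toReal = (ν (A ∩ S)).toReal + (ν (A \ S)).toReal := by
      rw [← ENNReal.toReal_add (measure_ne_top ν _) (measure_ne_top ν _),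
        measure_inter_add_diff A hSm]
    have d3 : (μ S).toReal = (μ (S ∩ A)).toReal + (μ (S \ A)).toReal := by
      rw [← ENNReal.toReal_add (measure_ne_top μ _) (measure_ne_top μ _),
        measure_inter_add_diff S hA]
    have d4 : (ν S).toReal = (ν (S ∩ A)).toReal + (ν (S \ A)).toReal := by
      rw [← ENNReal.toReal_add (measure_ne_top ν _) (measure_ne_top ν _),
        measure_inter_add_diff S hA]
    have e1 : (μ (A \ S)).toReal ≤ (ν (A \ S)).toReal :=
      ENNReal.toReal_mono (measure_ne_top ν _)
        (gauss_mono 1 v hone hvne _ (fun y hy => hpdfSc y hy.2))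
    have e2 : (ν (S \ A)).toReal ≤ (μ (S \ A)).toReal :=
      ENNReal.toReal_mono (measure_ne_top μ _)
        (gauss_mono v 1 hvne hone _ (fun y hy => hpdfS y hy.1))
    rw [Set.inter_comm A S] at d1 d2
    linarith
  have hvalnn : 0 ≤ (μ S).toReal - (ν S).toReal := by
    have := ENNReal.toReal_mono (measure_ne_top μ _)
      (gauss_mono v 1 hvne hone S hpdfS)
    linarith
  have keyabs : ∀ A : Set ℝ, MeasurableSet A →
      |(μ A).toReal - (ν A).toReal| ≤ (μ S).toReal - (ν S).toReal := by
    intro A hA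
    rw [abs_sub_le_iff]
    refine ⟨key A hA, ?_⟩
    have h1 := key Aᶜ hA.compl
    have hμc : (μ Aᶜ).toReal = 1 - (μ A).toReal := by
      rw [measure_compl hA (measure_ne_top μ A), measure_univ,
        ENNReal.toReal_sub_of_le prob_le_one ENNReal.one_ne_top, ENNReal.toReal_one]
    have hνc : (ν Aᶜ).toReal = 1 - (ν A).toReal := by
      rw [measure_compl hA (measure_ne_top ν A), measure_univ,
        ENNReal.toReal_sub_of_le prob_le_one ENNReal.one_ne_top, ENNReal.toReal_one]
    rw [hμc, hνc] at h1
    linarith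
  have htv : tvDist μ ν = (μ S).toReal - (ν S).toReal := by
    apply le_antisymm
    · exact ciSup_le fun A => keyabs A.1 A.2
    · have hb : BddAbove (Set.range fun A : {s : Set ℝ // MeasurableSet s} =>
          |(μ A.1).toReal - (ν A.1).toReal|) := by
        refine ⟨(μ S).toReal - (ν S).toReal, ?_⟩
        rintro _ ⟨A, rfl⟩
        exact keyabs A.1 A.2
      calc (μ S).toReal - (ν S).toReal = |(μ S).toReal - (ν S).toReal| :=
            (abs_of_nonneg hvalnn).symm
        _ ≤ tvDist μ ν := le_ciSup hb (⟨S, hSm⟩ : {s : Set ℝ // MeasurableSet s})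
  have hnull : ∀ a : ℝ, μ {a} = 0 := fun a =>
    gaussianReal_absolutelyContinuous 0 hone Real.volume_singleton
  have hnx : -x ≤ x := by linarith
  have hμS : (μ S).toReal = Phi x - Phi (-x) := icc_cdf _ _ μ (hnull _) hnx
  have hmap : μ.map (fun y => σ * y) = ν := by
    rw [hμ, hν, gaussianReal_map_const_mul σ]
    norm_num
    rfl
  have hxdiv0 : 0 ≤ x / σ := div_nonneg hx0 hσ0.le
  have hνS : (ν S).toReal = Phi (x / σ) - Phi (-(x / σ)) := by
    rw [← hmap, Measure.map_apply (measurable_const_mul σ) hSm, hS,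
      Set.preimage_const_mul_Icc₀ _ _ hσ0, neg_div]
    exact icc_cdf _ _ μ (hnull _) (by linarith)
  have phidiff : ∀ a b : ℝ, a ≤ b →
      Phi b - Phi a ≤ (b - a) * (Real.sqrt (2 * Real.pi))⁻¹ := by
    intro a b hab
    have h' : Phi b - Phi a = (μ (Set.Icc a b)).toReal := (icc_cdf a b μ (hnull a) hab).symm
    rw [h']
    have hle : μ (Set.Icc a b) ≤
        ENNReal.ofReal ((Real.sqrt (2 * Real.pi))⁻¹) * volume (Set.Icc a b) := by
      rw [hμ, gaussianReal_apply 0 hone]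
      calc ∫⁻ y in Set.Icc a b, gaussianPDF 0 1 y
          ≤ ∫⁻ _ in Set.Icc a b, ENNReal.ofReal ((Real.sqrt (2 * Real.pi))⁻¹) := by
            refine setLIntegral_mono measurable_const
              (fun y _ => ENNReal.ofReal_le_ofReal ?_)
            unfold gaussianPDFReal
            have he : Real.exp (-(y - 0) ^ 2 / (2 * ((1:NNReal):ℝ))) ≤ 1 := by
              apply Real.exp_le_one_iff.2
              have : (0:ℝ) ≤ (y - 0) ^ 2 := sq_nonneg _
              simp only [NNReal.coe_one]
              nlinarith
            have h0 : (0:ℝ) ≤ (Real.sqrt (2 * Real.pi * ((1:NNReal):ℝ)))⁻¹ := by positivity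
            calc (Real.sqrt (2 * Real.pi * ((1:NNReal):ℝ)))⁻¹ *
                  Real.exp (-(y - 0) ^ 2 / (2 * ((1:NNReal):ℝ)))
                ≤ (Real.sqrt (2 * Real.pi * ((1:NNReal):ℝ)))⁻¹ * 1 :=
                  mul_le_mul_of_nonneg_left he h0
              _ = (Real.sqrt (2 * Real.pi))⁻¹ := by norm_num
        _ = ENNReal.ofReal ((Real.sqrt (2 * Real.pi))⁻¹) * volume (Set.Icc a b) :=
            setLIntegral_const _ _
    have hs0 : 0 < Real.sqrt (2 * Real.pi) := Real.sqrt_pos.2 (by positivity)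
    calc (μ (Set.Icc a b)).toReal
        ≤ (ENNReal.ofReal ((Real.sqrt (2 * Real.pi))⁻¹) * volume (Set.Icc a b)).toReal := by
          refine ENNReal.toReal_mono ?_ hle
          rw [Real.volume_Icc]
          exact ENNReal.mul_ne_top ENNReal.ofReal_ne_top ENNReal.ofReal_ne_top
      _ = (b - a) * (Real.sqrt (2 * Real.pi))⁻¹ := by
          rw [Real.volume_Icc, ENNReal.toReal_mul, ENNReal.toReal_ofReal (by positivity),
            ENNReal.toReal_ofReal (by linarith)]
          ring
  constructor
  · rw [htv, hμS, hνS]; ring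
  · rw [htv, hμS, hνS]
    have hxσ : x ≤ σ := by
      have h1 : Real.log (σ ^ 2) ≤ σ ^ 2 - 1 := Real.log_le_sub_one_of_pos hσ2
      have h2 : 2 * Real.log σ ≤ σ ^ 2 - 1 := by
        rw [Real.log_pow] at h1; push_cast at h1; linarith
      have hcσ : c ≤ σ ^ 2 := by
        rw [hc, div_le_iff₀ hσ21]; nlinarith
      calc x ≤ Real.sqrt (σ ^ 2) := Real.sqrt_le_sqrt hcσ
        _ = σ := Real.sqrt_sq hσ0.le
    have hxdiv : x / σ ≤ x := div_le_self hx0 hσ.le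
    have h1 := phidiff (x / σ) x hxdiv
    have h2 := phidiff (-x) (-(x / σ)) (by linarith)
    have hs0 : 0 < Real.sqrt (2 * Real.pi) := Real.sqrt_pos.2 (by positivity)
    have hsq2 : Real.sqrt (2 / Real.pi) = 2 / Real.sqrt (2 * Real.pi) := by
      rw [eq_div_iff hs0.ne', ← Real.sqrt_mul (by positivity),
        show 2 / Real.pi * (2 * Real.pi) = 4 by field_simp; ring,
        show (4:ℝ) = 2 ^ 2 by norm_num, Real.sqrt_sq (by norm_num)]
    have hxx : x - x / σ ≤ σ - 1 := by
      have h3 : x - x / σ = x * (σ - 1) / σ := by field_simp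
      rw [h3, div_le_iff₀ hσ0]
      nlinarith
    calc Phi x - Phi (-x) - (Phi (x / σ) - Phi (-(x / σ)))
        = (Phi x - Phi (x / σ)) + (Phi (-(x / σ)) - Phi (-x)) := by ring
      _ ≤ (x - x / σ) * (Real.sqrt (2 * Real.pi))⁻¹
          + (-(x / σ) - -x) * (Real.sqrt (2 * Real.pi))⁻¹ := add_le_add h1 h2
      _ = 2 * (x - x / σ) * (Real.sqrt (2 * Real.pi))⁻¹ := by ring
      _ ≤ 2 * (σ - 1) * (Real.sqrt (2 * Real.pi))⁻¹ :=
          mul_le_mul_of_nonneg_right (by linarith) (inv_nonneg.2 hs0.le)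
      _ = Real.sqrt (2 / Real.pi) * (σ - 1) := by
          rw [hsq2]; ring
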